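/- Let G be a finite abstract simplicial complex. Then Gauss–Bonnet holds for the sphere curvature k(x) = ω(x)·(1 - χ(S(x))): ∑_{x∈G} ω(x)·(1 - χ(S(x))) = χ(G), where S(x) is the unit sphere of x. -/

import Mathlib

open Finset BigOperators

variable {α : Type*} [DecidableEq α]

/-- A finite abstract simplicial complex: a finite collection of nonempty finite
sets closed under taking nonempty subsets. -/
def IsComplex (G : Finset (Finset α)) : Prop :=
  (∀ x ∈ G, x.Nonempty) ∧ ∀ x ∈ G, ∀ y : Finset α, y.Nonempty → y ⊆ x → y ∈ G

/-- ω(x) = (-1)^(|x|-1). -/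
def omegaS (x : Finset α) : ℤ := (-1) ^ (x.card - 1)

/-- Euler characteristic χ(G) = ∑_{x∈G} ω(x). -/
def chi (G : Finset (Finset α)) : ℤ := ∑ x ∈ G, omegaS x

/-- The nonempty chains (subsets totally ordered by inclusion) of a finite
collection of finite sets. -/
def chainsOf (S : Finset (Finset α)) : Finset (Finset (Finset α)) :=
  S.powerset.filter (fun C => C.Nonempty ∧ ∀ a ∈ C, ∀ b ∈ C, a ⊆ b ∨ b ⊆ a)

/-- Euler characteristic of the simplicial complex whose simplices are the
nonempty chains in S: ∑_C (-1)^(|C|-1). -/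
def chiChains (S : Finset (Finset α)) : ℤ :=
  ∑ C ∈ chainsOf S, (-1) ^ (C.card - 1)

/-- The unit sphere of x in G: all simplices strictly contained in x or
strictly containing x. -/
def sphere (G : Finset (Finset α)) (x : Finset α) : Finset (Finset α) :=
  G.filter (fun y => y ⊂ x ∨ x ⊂ y)

/-- Chains including the empty chain. -/
def chainsE (S : Finset (Finset α)) : Finset (Finset (Finset α)) :=
  S.powerset.filter (fun C => ∀ a ∈ C, ∀ b ∈ C, a ⊆ b ∨ b ⊆ a)

/-- The nonempty proper subsets of x. -/
def below (x : Finset α) : Finset (Finset α) :=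
  x.powerset.filter (fun y => y.Nonempty ∧ y ≠ x)

lemma mem_chainsE {S C : Finset (Finset α)} :
    C ∈ chainsE S ↔ C ⊆ S ∧ ∀ a ∈ C, ∀ b ∈ C, a ⊆ b ∨ b ⊆ a := by
  simp [chainsE, mem_filter, mem_powerset]

lemma mem_chainsOf {S C : Finset (Finset α)} :
    C ∈ chainsOf S ↔ C ⊆ S ∧ C.Nonempty ∧ ∀ a ∈ C, ∀ b ∈ C, a ⊆ b ∨ b ⊆ a := by
  simp [chainsOf, mem_filter, mem_powerset]

lemma mem_below {x y : Finset α} : y ∈ below x ↔ y ⊆ x ∧ y.Nonempty ∧ y ≠ x := by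
  simp [below, mem_filter, mem_powerset]

lemma neg_pow_card {β : Type*} {m : Finset β} (hm : m.Nonempty) :
    (-1 : ℤ) ^ m.card = -(-1) ^ (m.card - 1) := by
  conv_lhs => rw [show m.card = (m.card - 1) + 1 from
    (Nat.succ_pred_eq_of_pos (card_pos.2 hm)).symm, pow_succ]
  ring

lemma chainsE_eq (S : Finset (Finset α)) : chainsE S = insert ∅ (chainsOf S) := by
  ext C
  by_cases hC : C = ∅
  · subst hC
    simp [mem_chainsE]
  · simp only [mem_insert, hC, false_or, mem_chainsE, mem_chainsOf,
      Finset.nonempty_iff_ne_empty]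
    tauto

lemma sum_chainsE (S : Finset (Finset α)) (f : Finset (Finset α) → ℤ) :
    ∑ C ∈ chainsE S, f C = f ∅ + ∑ C ∈ chainsOf S, f C := by
  rw [chainsE_eq, sum_insert]
  intro h
  exact absurd (mem_chainsOf.1 h).2.1 (by simp)

lemma sup_mem_chain {C : Finset (Finset α)} (hne : C.Nonempty)
    (hch : ∀ a ∈ C, ∀ b ∈ C, a ⊆ b ∨ b ⊆ a) : C.sup id ∈ C := by
  induction C using Finset.induction with
  | empty => exact absurd hne (by simp)
  | insert a s ha ih =>
    rcases s.eq_empty_or_nonempty with hs | hs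
    · subst hs; simp
    · have hchs : ∀ x ∈ s, ∀ y ∈ s, x ⊆ y ∨ y ⊆ x := fun x hx y hy =>
        hch x (mem_insert_of_mem hx) y (mem_insert_of_mem hy)
      have hsup := ih hs hchs
      rw [Finset.sup_insert]
      rcases hch a (mem_insert_self a s) (s.sup id) (mem_insert_of_mem hsup) with h | h
      · rw [show (id a ⊔ s.sup id) = s.sup id from sup_eq_right.2 h]
        exact mem_insert_of_mem hsup
      · rw [show (id a ⊔ s.sup id) = a from sup_eq_left.2 h]
        exact mem_insert_self a s

lemma chain_partition (S : Finset (Finset α)) (f : Finset (Finset α) → ℤ) :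
    ∑ C ∈ chainsOf S, f C
      = ∑ m ∈ S, ∑ A ∈ chainsE (S.filter (· ⊂ m)), f (insert m A) := by
  rw [← Finset.sum_sigma (S) (fun m => chainsE (S.filter (· ⊂ m)))
    (fun p => f (insert p.1 p.2))]
  refine Finset.sum_nbij'
    (fun C => (⟨C.sup id, C.erase (C.sup id)⟩ : Σ _ : Finset α, Finset (Finset α)))
    (fun p => insert p.1 p.2) ?_ ?_ ?_ ?_ ?_
  · intro C hC
    obtain ⟨hsub, hne, hch⟩ := mem_chainsOf.1 hC
    have hsup := sup_mem_chain hne hch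
    rw [mem_sigma]
    refine ⟨hsub hsup, mem_chainsE.2 ⟨?_, ?_⟩⟩
    · intro a ha
      have ha' := mem_of_mem_erase ha
      rw [mem_filter]
      exact ⟨hsub ha', lt_of_le_of_ne (Finset.le_sup (f := id) ha') (ne_of_mem_erase ha)⟩
    · intro a ha b hb
      exact hch a (mem_of_mem_erase ha) b (mem_of_mem_erase hb)
  · rintro ⟨m, A⟩ hp
    rw [mem_sigma] at hp
    obtain ⟨hm, hA⟩ := hp
    obtain ⟨hAsub, hAch⟩ := mem_chainsE.1 hA
    have hAlt : ∀ z ∈ A, z ⊂ m := fun z hz => (mem_filter.1 (hAsub hz)).2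
    refine mem_chainsOf.2 ⟨?_, insert_nonempty _ _, ?_⟩
    · intro z hz
      rcases mem_insert.1 hz with rfl | hz
      · exact hm
      · exact (mem_filter.1 (hAsub hz)).1
    · intro a ha b hb
      rcases mem_insert.1 ha with rfl | ha <;> rcases mem_insert.1 hb with rfl | hb
      · left; rfl
      · right; exact (hAlt b hb).subset
      · left; exact (hAlt a ha).subset
      · exact hAch a ha b hb
  · intro C hC
    obtain ⟨_, hne, hch⟩ := mem_chainsOf.1 hC
    exact insert_erase (sup_mem_chain hne hch)
  · rintro ⟨m, A⟩ hp
    rw [mem_sigma] at hp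
    obtain ⟨hm, hA⟩ := hp
    obtain ⟨hAsub, _⟩ := mem_chainsE.1 hA
    have hAlt : ∀ z ∈ A, z ⊂ m := fun z hz => (mem_filter.1 (hAsub hz)).2
    have hmA : m ∉ A := fun h => (hAlt m h).ne rfl
    have hsup : (insert m A).sup id = m := by
      rw [Finset.sup_insert]
      exact sup_eq_left.2 (Finset.sup_le fun z hz => (hAlt z hz).1)
    simp only [hsup, erase_insert hmA]
  · intro C hC
    obtain ⟨_, hne, hch⟩ := mem_chainsOf.1 hC
    rw [insert_erase (sup_mem_chain hne hch)]

lemma below_filter {x m : Finset α} (hm : m ∈ below x) :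
    (below x).filter (· ⊂ m) = below m := by
  obtain ⟨hmx, _, hmne⟩ := mem_below.1 hm
  ext z
  simp only [mem_filter, mem_below]
  constructor
  · rintro ⟨⟨_, hz, _⟩, hzm⟩
    exact ⟨hzm.1, hz, fun h => hzm.2 (h ▸ le_refl _)⟩
  · rintro ⟨hzm, hz, hzne⟩
    have hzm' : z ⊂ m := lt_of_le_of_ne hzm hzne
    have hzx : z ⊂ x := lt_of_lt_of_le hzm' hmx
    exact ⟨⟨hzx.1, hz, hzx.ne⟩, hzm'⟩

lemma card_insert_below {m : Finset α} {A : Finset (Finset α)}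
    (hA : A ∈ chainsE (below m)) : m ∉ A := by
  intro h
  have := (mem_below.1 ((mem_chainsE.1 hA).1 h)).2.2
  exact this rfl

lemma sum_below_omega (x : Finset α) (hx : x.Nonempty) :
    ∑ m ∈ below x, (-1 : ℤ) ^ (m.card - 1) = 1 - (-1) ^ (x.card - 1) := by
  have h0 := Finset.sum_powerset_neg_one_pow_card_of_nonempty hx
  have hdec : x.powerset = insert ∅ (insert x (below x)) := by
    ext y
    by_cases hy : y = ∅
    · simp [hy]
    · by_cases hyx : y = x
      · simp [hyx]
      · simp [mem_powerset, mem_below, hy, hyx, Finset.nonempty_iff_ne_empty]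
  rw [hdec, sum_insert, sum_insert] at h0
  · have h1 : ∑ m ∈ below x, (-1 : ℤ) ^ m.card
        = ∑ m ∈ below x, -(-1 : ℤ) ^ (m.card - 1) :=
      sum_congr rfl fun m hm => neg_pow_card (mem_below.1 hm).2.1
    rw [h1, Finset.sum_neg_distrib, neg_pow_card hx] at h0
    simp only [card_empty, pow_zero] at h0
    linarith
  · intro h
    exact (mem_below.1 h).2.2 rfl
  · intro h
    rcases mem_insert.1 h with h | h
    · exact hx.ne_empty h.symm
    · exact (mem_below.1 h).2.1.ne_empty rfl

lemma chainsE_below_sum (x : Finset α) :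
    x.Nonempty → ∑ A ∈ chainsE (below x), (-1 : ℤ) ^ A.card = (-1) ^ (x.card - 1) := by
  induction x using Finset.strongInductionOn with
  | _ x ih =>
  intro hx
  rw [sum_chainsE, chain_partition]
  have hinner : ∀ m ∈ below x,
      ∑ A ∈ chainsE ((below x).filter (· ⊂ m)), (-1 : ℤ) ^ (insert m A).card
        = -(-1) ^ (m.card - 1) := by
    intro m hm
    obtain ⟨hmx, hmne, hmnex⟩ := mem_below.1 hm
    rw [below_filter hm]
    have : ∀ A ∈ chainsE (below m), (-1 : ℤ) ^ (insert m A).card = -(-1) ^ A.card := by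
      intro A hA
      rw [card_insert_of_notMem (card_insert_below hA), pow_succ]
      ring
    rw [sum_congr rfl this, Finset.sum_neg_distrib,
      ih m (lt_of_le_of_ne hmx hmnex) hmne]
  rw [sum_congr rfl hinner, Finset.sum_neg_distrib, sum_below_omega x hx]
  simp only [card_empty, pow_zero]
  ring

lemma chainsE_below_weighted_sum (x : Finset α) :
    x.Nonempty → ∑ A ∈ chainsE (below x), (-1 : ℤ) ^ A.card * (∑ y ∈ A, omegaS y)
      = (-1) ^ (x.card - 1) - 1 := by
  induction x using Finset.strongInductionOn with
  | _ x ih =>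
  intro hx
  rw [sum_chainsE, chain_partition]
  have hinner : ∀ m ∈ below x,
      ∑ A ∈ chainsE ((below x).filter (· ⊂ m)),
        (-1 : ℤ) ^ (insert m A).card * (∑ y ∈ insert m A, omegaS y)
        = -(-1) ^ (m.card - 1) := by
    intro m hm
    obtain ⟨hmx, hmne, hmnex⟩ := mem_below.1 hm
    rw [below_filter hm]
    have hterm : ∀ A ∈ chainsE (below m),
        (-1 : ℤ) ^ (insert m A).card * (∑ y ∈ insert m A, omegaS y)
          = -(omegaS m * (-1) ^ A.card) - (-1) ^ A.card * (∑ y ∈ A, omegaS y) := by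
      intro A hA
      rw [card_insert_of_notMem (card_insert_below hA),
        Finset.sum_insert (card_insert_below hA), pow_succ]
      ring
    rw [sum_congr rfl hterm, Finset.sum_sub_distrib, Finset.sum_neg_distrib,
      ← Finset.mul_sum, chainsE_below_sum m hmne,
      ih m (lt_of_le_of_ne hmx hmnex) hmne]
    have homega : omegaS m * (-1 : ℤ) ^ (m.card - 1) = 1 := by
      rw [omegaS, ← pow_add]
      exact Even.neg_one_pow ⟨m.card - 1, rfl⟩
    rw [homega]
    ring
  rw [sum_congr rfl hinner, Finset.sum_neg_distrib, sum_below_omega x hx]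
  simp only [card_empty, pow_zero, Finset.sum_empty, mul_zero]
  ring

/-- Sphere Gauss–Bonnet: ∑_{x∈G} ω(x)·(1 - χ(S(x))) = χ(G). -/
theorem sphere_gauss_bonnet (G : Finset (Finset α)) (hG : IsComplex G) :
    ∑ x ∈ G, omegaS x * (1 - chiChains (sphere G x)) = chi G := by
  -- Step 1: 1 - chiChains (sphere G x) = sum over chainsE of the sphere
  have step1 : ∀ x : Finset α,
      1 - chiChains (sphere G x) = ∑ C ∈ chainsE (sphere G x), (-1 : ℤ) ^ C.card := by
    intro x
    rw [sum_chainsE]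
    have : ∑ C ∈ chainsOf (sphere G x), (-1 : ℤ) ^ C.card
        = -chiChains (sphere G x) := by
      rw [chiChains, ← Finset.sum_neg_distrib]
      exact sum_congr rfl fun C hC => neg_pow_card (mem_chainsOf.1 hC).2.1
    rw [this]
    simp only [card_empty, pow_zero]
    ring
  -- Step 2: biject chains of the sphere with chains of G containing x
  have step2 : ∀ x ∈ G, ∑ C ∈ chainsE (sphere G x), (-1 : ℤ) ^ C.card
      = ∑ D ∈ (chainsOf G).filter (fun D => x ∈ D), (-1 : ℤ) ^ (D.card - 1) := by
    intro x hx
    refine Finset.sum_nbij' (fun C => insert x C) (fun D => D.erase x) ?_ ?_ ?_ ?_ ?_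
    · intro C hC
      obtain ⟨hsub, hch⟩ := mem_chainsE.1 hC
      have hcmp : ∀ y ∈ C, y ⊂ x ∨ x ⊂ y := fun y hy => (mem_filter.1 (hsub hy)).2
      rw [mem_filter]
      refine ⟨mem_chainsOf.2 ⟨?_, insert_nonempty _ _, ?_⟩, mem_insert_self x C⟩
      · intro z hz
        rcases mem_insert.1 hz with rfl | hz
        · exact hx
        · exact (mem_filter.1 (hsub hz)).1
      · intro a ha b hb
        have key : ∀ y ∈ C, y ⊆ x ∨ x ⊆ y := fun y hy => (hcmp y hy).imp (·.1) (·.1)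
        rcases mem_insert.1 ha with h1 | h1 <;> rcases mem_insert.1 hb with h2 | h2
        · left; rw [h1, h2]
        · rw [h1]; exact (key b h2).symm
        · rw [h2]; exact key a h1
        · exact hch a h1 b h2
    · intro D hD
      obtain ⟨hD', hxD⟩ := mem_filter.1 hD
      obtain ⟨hsub, _, hch⟩ := mem_chainsOf.1 hD'
      refine mem_chainsE.2 ⟨?_, ?_⟩
      · intro a ha
        have haD := mem_of_mem_erase ha
        have hane := ne_of_mem_erase ha
        rw [sphere, mem_filter]
        refine ⟨hsub haD, ?_⟩
        rcases hch a haD x hxD with h | h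
        · left; exact lt_of_le_of_ne h hane
        · right; exact lt_of_le_of_ne h (Ne.symm hane)
      · intro a ha b hb
        exact hch a (mem_of_mem_erase ha) b (mem_of_mem_erase hb)
    · intro C hC
      have hxC : x ∉ C := by
        intro h
        rcases (mem_filter.1 ((mem_chainsE.1 hC).1 h)).2 with h' | h' <;>
          exact (h'.ne rfl).elim
      rw [erase_insert hxC]
    · intro D hD
      rw [insert_erase (mem_filter.1 hD).2]
    · intro C hC
      have hxC : x ∉ C := by
        intro h
        rcases (mem_filter.1 ((mem_chainsE.1 hC).1 h)).2 with h' | h' <;>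
          exact (h'.ne rfl).elim
      rw [card_insert_of_notMem hxC, Nat.add_sub_cancel]
  -- Step 3: swap the sums
  have step3 : ∑ x ∈ G, omegaS x *
      (∑ D ∈ (chainsOf G).filter (fun D => x ∈ D), (-1 : ℤ) ^ (D.card - 1))
      = ∑ D ∈ chainsOf G, (-1 : ℤ) ^ (D.card - 1) * (∑ y ∈ D, omegaS y) := by
    have h1 : ∀ x ∈ G, omegaS x *
        (∑ D ∈ (chainsOf G).filter (fun D => x ∈ D), (-1 : ℤ) ^ (D.card - 1))
        = ∑ D ∈ chainsOf G, if x ∈ D then omegaS x * (-1 : ℤ) ^ (D.card - 1) else 0 := by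
      intro x _
      rw [Finset.mul_sum, Finset.sum_filter]
    rw [sum_congr rfl h1, Finset.sum_comm]
    refine sum_congr rfl fun D hD => ?_
    have hsub : D ⊆ G := (mem_chainsOf.1 hD).1
    have hfil : G.filter (fun x => x ∈ D) = D := by
      ext z
      simp only [mem_filter, and_iff_right_iff_imp]
      exact fun h => hsub h
    rw [← Finset.sum_filter, hfil, ← Finset.sum_mul, mul_comm]
  -- Step 4: partition chains of G by their maximum and evaluate
  have step4 : ∑ D ∈ chainsOf G, (-1 : ℤ) ^ (D.card - 1) * (∑ y ∈ D, omegaS y)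
      = chi G := by
    rw [chain_partition]
    have hfil : ∀ m ∈ G, G.filter (· ⊂ m) = below m := by
      intro m hm
      ext z
      simp only [mem_filter, mem_below]
      constructor
      · rintro ⟨hz, hzm⟩
        exact ⟨hzm.1, hG.1 z hz, fun h => hzm.2 (h ▸ le_refl _)⟩
      · rintro ⟨hzm, hz, hzne⟩
        exact ⟨hG.2 m hm z hz hzm, lt_of_le_of_ne hzm hzne⟩
    have hinner : ∀ m ∈ G,
        ∑ A ∈ chainsE (G.filter (· ⊂ m)),
          (-1 : ℤ) ^ ((insert m A).card - 1) * (∑ y ∈ insert m A, omegaS y)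
          = omegaS m := by
      intro m hm
      have hmne := hG.1 m hm
      rw [hfil m hm]
      have hterm : ∀ A ∈ chainsE (below m),
          (-1 : ℤ) ^ ((insert m A).card - 1) * (∑ y ∈ insert m A, omegaS y)
            = omegaS m * (-1) ^ A.card + (-1) ^ A.card * (∑ y ∈ A, omegaS y) := by
        intro A hA
        rw [card_insert_of_notMem (card_insert_below hA), Nat.add_sub_cancel,
          Finset.sum_insert (card_insert_below hA)]
        ring
      rw [sum_congr rfl hterm, Finset.sum_add_distrib, ← Finset.mul_sum,
        chainsE_below_sum m hmne, chainsE_below_weighted_sum m hmne]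
      have homega : omegaS m * (-1 : ℤ) ^ (m.card - 1) = 1 := by
        rw [omegaS, ← pow_add]
        exact Even.neg_one_pow ⟨m.card - 1, rfl⟩
      rw [homega, omegaS]
      ring
    rw [sum_congr rfl hinner, chi]
  calc ∑ x ∈ G, omegaS x * (1 - chiChains (sphere G x))
      = ∑ x ∈ G, omegaS x *
          (∑ D ∈ (chainsOf G).filter (fun D => x ∈ D), (-1 : ℤ) ^ (D.card - 1)) := by
        refine sum_congr rfl fun x hx => ?_
        rw [step1 x, step2 x hx]
    _ = chi G := by rw [step3, step4]
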